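/- Let W > 0, let σ, κ : ℝ → ℝ be continuous on [0,W], and let a, b, E ∈ ℝ. Suppose (φe¹, φl¹) and (φe², φl²) are both solutions of the 1D coupled porous-electrode system on [0,W] whose Neumann data agree at both endpoints (σ(0)·(φe¹)'(0) = σ(0)·(φe²)'(0), σ(W)·(φe¹)'(W) = σ(W)·(φe²)'(W), κ(0)·(φl¹)'(0) = κ(0)·(φl²)'(0), κ(W)·(φl¹)'(W) = κ(W)·(φl²)'(W)). Set ξe = φe¹ − φe², ξl = φl¹ − φl², η¹ = φe¹ − φl¹ − E, η² = φe² − φl² − E. Then ∫₀^W σ(x)·(ξe'(x))² dx + ∫₀^W κ(x)·(ξl'(x))² dx = −∫₀^W (a·sinh(b·η¹(x)) − a·sinh(b·η²(x)))·(η¹(x) − η²(x)) dx. -/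

import Mathlib

open Set

noncomputable section

/-- `(φe, φl)` is a solution of the 1D coupled porous-electrode system on `[0, W]`. -/
def IsSolution1D (W : ℝ) (σ κ : ℝ → ℝ) (a b E : ℝ) (φe φl : ℝ → ℝ) : Prop :=
  ContDiffOn ℝ 1 φe (Icc 0 W) ∧ ContDiffOn ℝ 1 φl (Icc 0 W) ∧
  ContDiffOn ℝ 1 (fun x => σ x * deriv φe x) (Icc 0 W) ∧
  ContDiffOn ℝ 1 (fun x => κ x * deriv φl x) (Icc 0 W) ∧
  (∀ x ∈ Icc 0 W, deriv (fun y => σ y * deriv φe y) x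
      = a * Real.sinh (b * (φe x - φl x - E))) ∧
  (∀ x ∈ Icc 0 W, deriv (fun y => κ y * deriv φl y) x
      = -(a * Real.sinh (b * (φe x - φl x - E))))

/-- Integration by parts with vanishing boundary term. -/
lemma ibp_zero (W : ℝ) (hW : 0 ≤ W) (F ξ r d : ℝ → ℝ)
    (hF : ContinuousOn F (Icc 0 W)) (hξ : ContinuousOn ξ (Icc 0 W))
    (hr : ContinuousOn r (Icc 0 W)) (hd : ContinuousOn d (Icc 0 W))
    (hF' : ∀ x ∈ Ioo 0 W, HasDerivAt F (r x) x)
    (hξ' : ∀ x ∈ Ioo 0 W, HasDerivAt ξ (d x) x)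
    (hF0 : F 0 = 0) (hFW : F W = 0) :
    ∫ x in (0:ℝ)..W, F x * d x = -∫ x in (0:ℝ)..W, r x * ξ x := by
  have hicc : uIcc (0:ℝ) W = Icc 0 W := uIcc_of_le hW
  have hint1 : IntervalIntegrable (fun x => r x * ξ x) MeasureTheory.volume 0 W :=
    by apply ContinuousOn.intervalIntegrable; rw [hicc]; exact hr.mul hξ
  have hint2 : IntervalIntegrable (fun x => F x * d x) MeasureTheory.volume 0 W :=
    by apply ContinuousOn.intervalIntegrable; rw [hicc]; exact hF.mul hd
  have key : ∫ x in (0:ℝ)..W, (r x * ξ x + F x * d x) = F W * ξ W - F 0 * ξ 0 := by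
    apply intervalIntegral.integral_eq_sub_of_hasDeriv_right_of_le hW
    · exact hF.mul hξ
    · intro x hx
      exact (((hF' x hx).mul (hξ' x hx))).hasDerivWithinAt
    · exact hint1.add hint2
  rw [intervalIntegral.integral_add hint1 hint2, hF0, hFW] at key
  simp at key
  linarith

/-- The energy identity for the difference of two solutions with the same Neumann data:
`∫ σ (ξe')² + ∫ κ (ξl')² = −∫ (f(η¹) − f(η²))(η¹ − η²)` with `f(t) = a·sinh(b·t)`. -/
theorem energy_identity_for_difference
    (W : ℝ) (hW : 0 < W) (σ κ : ℝ → ℝ)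
    (hσc : ContinuousOn σ (Icc 0 W)) (hκc : ContinuousOn κ (Icc 0 W))
    (a b E : ℝ)
    (φe₁ φl₁ φe₂ φl₂ : ℝ → ℝ)
    (h₁ : IsSolution1D W σ κ a b E φe₁ φl₁)
    (h₂ : IsSolution1D W σ κ a b E φe₂ φl₂)
    (hbc₁ : σ 0 * deriv φe₁ 0 = σ 0 * deriv φe₂ 0)
    (hbc₂ : σ W * deriv φe₁ W = σ W * deriv φe₂ W)
    (hbc₃ : κ 0 * deriv φl₁ 0 = κ 0 * deriv φl₂ 0)
    (hbc₄ : κ W * deriv φl₁ W = κ W * deriv φl₂ W) :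
    (∫ x in (0:ℝ)..W, σ x * (deriv (fun y => φe₁ y - φe₂ y) x) ^ 2)
      + (∫ x in (0:ℝ)..W, κ x * (deriv (fun y => φl₁ y - φl₂ y) x) ^ 2)
    = -∫ x in (0:ℝ)..W,
        (a * Real.sinh (b * (φe₁ x - φl₁ x - E))
          - a * Real.sinh (b * (φe₂ x - φl₂ x - E)))
        * ((φe₁ x - φl₁ x - E) - (φe₂ x - φl₂ x - E)) := by
  obtain ⟨he₁, hl₁, hu₁, hv₁, heq₁, hleq₁⟩ := h₁
  obtain ⟨he₂, hl₂, hu₂, hv₂, heq₂, hleq₂⟩ := h₂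
  have hW' : (0:ℝ) ≤ W := hW.le
  have hicc : uIcc (0:ℝ) W = Icc 0 W := uIcc_of_le hW'
  have hud : UniqueDiffOn ℝ (Icc (0:ℝ) W) := uniqueDiffOn_Icc hW
  -- abbreviations
  set R : ℝ → ℝ := fun x => a * Real.sinh (b * (φe₁ x - φl₁ x - E))
      - a * Real.sinh (b * (φe₂ x - φl₂ x - E)) with hR
  set Fe : ℝ → ℝ := fun x => σ x * deriv φe₁ x - σ x * deriv φe₂ x with hFe
  set Fl : ℝ → ℝ := fun x => κ x * deriv φl₁ x - κ x * deriv φl₂ x with hFl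
  set ξe : ℝ → ℝ := fun x => φe₁ x - φe₂ x with hξe
  set ξl : ℝ → ℝ := fun x => φl₁ x - φl₂ x with hξl
  set de : ℝ → ℝ := fun x => derivWithin φe₁ (Icc 0 W) x - derivWithin φe₂ (Icc 0 W) x with hde
  set dl : ℝ → ℝ := fun x => derivWithin φl₁ (Icc 0 W) x - derivWithin φl₂ (Icc 0 W) x with hdl
  -- continuity
  have hRc : ContinuousOn R (Icc 0 W) := by
    apply ContinuousOn.sub
    · exact (Real.continuous_sinh.comp_continuousOn
        (((he₁.continuousOn.sub hl₁.continuousOn).sub continuousOn_const).const_smul b)).const_smul a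
    · exact (Real.continuous_sinh.comp_continuousOn
        (((he₂.continuousOn.sub hl₂.continuousOn).sub continuousOn_const).const_smul b)).const_smul a
  have hFec : ContinuousOn Fe (Icc 0 W) := hu₁.continuousOn.sub hu₂.continuousOn
  have hFlc : ContinuousOn Fl (Icc 0 W) := hv₁.continuousOn.sub hv₂.continuousOn
  have hξec : ContinuousOn ξe (Icc 0 W) := he₁.continuousOn.sub he₂.continuousOn
  have hξlc : ContinuousOn ξl (Icc 0 W) := hl₁.continuousOn.sub hl₂.continuousOn
  have hdec : ContinuousOn de (Icc 0 W) :=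
    (he₁.continuousOn_derivWithin hud le_rfl).sub (he₂.continuousOn_derivWithin hud le_rfl)
  have hdlc : ContinuousOn dl (Icc 0 W) :=
    (hl₁.continuousOn_derivWithin hud le_rfl).sub (hl₂.continuousOn_derivWithin hud le_rfl)
  -- interior membership facts
  have hmem : ∀ x ∈ Ioo (0:ℝ) W, Icc (0:ℝ) W ∈ nhds x := fun x hx => Icc_mem_nhds hx.1 hx.2
  have hdAt : ∀ (f : ℝ → ℝ), ContDiffOn ℝ 1 f (Icc 0 W) → ∀ x ∈ Ioo (0:ℝ) W,
      HasDerivAt f (deriv f x) x := by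
    intro f hf x hx
    exact ((hf.differentiableOn one_ne_zero x (Ioo_subset_Icc_self hx)).differentiableAt
      (hmem x hx)).hasDerivAt
  have hdw : ∀ (f : ℝ → ℝ), ∀ x ∈ Ioo (0:ℝ) W, derivWithin f (Icc 0 W) x = deriv f x := by
    intro f x hx
    exact derivWithin_of_mem_nhds (hmem x hx)
  -- derivative facts on the interior
  have hFe' : ∀ x ∈ Ioo (0:ℝ) W, HasDerivAt Fe (R x) x := by
    intro x hx
    have h1 := hdAt _ hu₁ x hx
    have h2 := hdAt _ hu₂ x hx
    rw [heq₁ x (Ioo_subset_Icc_self hx)] at h1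
    rw [heq₂ x (Ioo_subset_Icc_self hx)] at h2
    exact h1.sub h2
  have hFl' : ∀ x ∈ Ioo (0:ℝ) W, HasDerivAt Fl (-R x) x := by
    intro x hx
    have h1 := hdAt _ hv₁ x hx
    have h2 := hdAt _ hv₂ x hx
    rw [hleq₁ x (Ioo_subset_Icc_self hx)] at h1
    rw [hleq₂ x (Ioo_subset_Icc_self hx)] at h2
    have := h1.sub h2
    convert this using 1
    · rfl
    · rfl
    · rfl
    change -(a * Real.sinh (b * (φe₁ x - φl₁ x - E)) - a * Real.sinh (b * (φe₂ x - φl₂ x - E))) = _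
    ring
  have hξe' : ∀ x ∈ Ioo (0:ℝ) W, HasDerivAt ξe (de x) x := by
    intro x hx
    have h1 := hdAt _ he₁ x hx
    have h2 := hdAt _ he₂ x hx
    have h3 := h1.sub h2
    have hdx : de x = deriv φe₁ x - deriv φe₂ x := by
      simp only [hde]; rw [hdw φe₁ x hx, hdw φe₂ x hx]
    rw [hdx]; exact h3
  have hξl' : ∀ x ∈ Ioo (0:ℝ) W, HasDerivAt ξl (dl x) x := by
    intro x hx
    have h1 := hdAt _ hl₁ x hx
    have h2 := hdAt _ hl₂ x hx
    have h3 := h1.sub h2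
    have hdx : dl x = deriv φl₁ x - deriv φl₂ x := by
      simp only [hdl]; rw [hdw φl₁ x hx, hdw φl₂ x hx]
    rw [hdx]; exact h3
  -- boundary values
  have hFe0 : Fe 0 = 0 := by simp [hFe]; linarith
  have hFeW : Fe W = 0 := by simp [hFe]; linarith
  have hFl0 : Fl 0 = 0 := by simp [hFl]; linarith
  have hFlW : Fl W = 0 := by simp [hFl]; linarith
  -- IBP for each component
  have ibpe : ∫ x in (0:ℝ)..W, Fe x * de x = -∫ x in (0:ℝ)..W, R x * ξe x :=
    ibp_zero W hW' Fe ξe R de hFec hξec hRc hdec hFe' hξe' hFe0 hFeW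
  have ibpl : ∫ x in (0:ℝ)..W, Fl x * dl x = -∫ x in (0:ℝ)..W, (-R x) * ξl x :=
    ibp_zero W hW' Fl ξl (fun x => -R x) dl hFlc hξlc hRc.neg hdlc hFl' hξl' hFl0 hFlW
  have ibpl' : ∫ x in (0:ℝ)..W, Fl x * dl x = ∫ x in (0:ℝ)..W, R x * ξl x := by
    rw [ibpl, ← intervalIntegral.integral_neg]
    congr 1; funext x; ring
  -- a.e. congruence for the left integrals
  have haeW : ∀ᵐ x : ℝ, x ≠ W := by
    have : (MeasureTheory.volume : MeasureTheory.Measure ℝ) {W} = 0 :=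
      MeasureTheory.measure_singleton W
    simpa [MeasureTheory.ae_iff] using this
  have hIoo : ∀ᵐ x : ℝ, x ∈ uIoc (0:ℝ) W → x ∈ Ioo (0:ℝ) W := by
    filter_upwards [haeW] with x hx hmem'
    rw [uIoc_of_le hW'] at hmem'
    exact ⟨hmem'.1, lt_of_le_of_ne hmem'.2 hx⟩
  have hcongr_e : ∫ x in (0:ℝ)..W, σ x * (deriv (fun y => φe₁ y - φe₂ y) x) ^ 2
      = ∫ x in (0:ℝ)..W, Fe x * de x := by
    apply intervalIntegral.integral_congr_ae
    filter_upwards [hIoo] with x hx hmem'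
    have hx' := hx hmem'
    have hd1 : deriv (fun y => φe₁ y - φe₂ y) x = deriv φe₁ x - deriv φe₂ x := by
      exact deriv_sub ((he₁.differentiableOn one_ne_zero x (Ioo_subset_Icc_self hx')).differentiableAt
        (hmem x hx')) ((he₂.differentiableOn one_ne_zero x (Ioo_subset_Icc_self hx')).differentiableAt
        (hmem x hx'))
    have hd2 : de x = deriv φe₁ x - deriv φe₂ x := by
      simp only [hde]; rw [hdw φe₁ x hx', hdw φe₂ x hx']
    rw [hd1, hFe, hd2]
    ring
  have hcongr_l : ∫ x in (0:ℝ)..W, κ x * (deriv (fun y => φl₁ y - φl₂ y) x) ^ 2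
      = ∫ x in (0:ℝ)..W, Fl x * dl x := by
    apply intervalIntegral.integral_congr_ae
    filter_upwards [hIoo] with x hx hmem'
    have hx' := hx hmem'
    have hd1 : deriv (fun y => φl₁ y - φl₂ y) x = deriv φl₁ x - deriv φl₂ x := by
      exact deriv_sub ((hl₁.differentiableOn one_ne_zero x (Ioo_subset_Icc_self hx')).differentiableAt
        (hmem x hx')) ((hl₂.differentiableOn one_ne_zero x (Ioo_subset_Icc_self hx')).differentiableAt
        (hmem x hx'))
    have hd2 : dl x = deriv φl₁ x - deriv φl₂ x := by
      simp only [hdl]; rw [hdw φl₁ x hx', hdw φl₂ x hx']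
    rw [hd1, hFl, hd2]
    ring
  -- combine
  have hintRe : IntervalIntegrable (fun x => R x * ξe x) MeasureTheory.volume 0 W :=
    by apply ContinuousOn.intervalIntegrable; rw [hicc]; exact hRc.mul hξec
  have hintRl : IntervalIntegrable (fun x => R x * ξl x) MeasureTheory.volume 0 W :=
    by apply ContinuousOn.intervalIntegrable; rw [hicc]; exact hRc.mul hξlc
  have hRHS : ∫ x in (0:ℝ)..W,
        (a * Real.sinh (b * (φe₁ x - φl₁ x - E))
          - a * Real.sinh (b * (φe₂ x - φl₂ x - E)))
        * ((φe₁ x - φl₁ x - E) - (φe₂ x - φl₂ x - E))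
      = (∫ x in (0:ℝ)..W, R x * ξe x) - ∫ x in (0:ℝ)..W, R x * ξl x := by
    rw [← intervalIntegral.integral_sub hintRe hintRl]
    apply intervalIntegral.integral_congr
    intro x _
    simp only [hR, hξe, hξl]
    ring
  rw [hcongr_e, hcongr_l, ibpe, ibpl', hRHS]
  ring
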